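/- Let k ≥ 2, let I₁,…,I_k ⊆ ℝ₊ be nonempty open intervals with I := I₁×⋯×I_k, and for α ∈ {0,…,k} let f_α : I_α → ℝ be differentiable with nonvanishing derivative and p₀^α : I_α → ℝ₊, and let Φ : I → I₀ be partially differentiable. Assume that for all u, y ∈ I: p₀⁰(Φ(y))(f₀(Φ(y)) − f₀(Φ(u)))/(p₀⁰(Φ(u))f₀'(Φ(u))) ≤ ∑_{j=1}^k ∂_jΦ(u)·p₀^j(y_j)(f_j(y_j) − f_j(u_j))/(p₀^j(u_j)f_j'(u_j)). Then for all n ∈ ℕ and all λ ∈ ℝ₊ⁿ with λ₁+⋯+λₙ = 1 and all x ∈ ℝ^{n×k} with rows xᵢ ∈ I: A_{f₀,p₀⁰λ}(Φ(x₁),…,Φ(xₙ)) ≤ Φ(A_{f₁,p₀¹λ}(x¹),…,A_{f_k,p₀^kλ}(x^k)). -/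

import Mathlib

open Finset

/-- The nonsymmetric generalized Bajraktarević mean with weight functions `p_ℓ = λ_ℓ p₀`:
`A_{f,p₀λ}(x) = f⁻¹((∑ᵢ λᵢp₀(xᵢ)f(xᵢ))/(∑ᵢ λᵢp₀(xᵢ)))`, the inverse of `f` taken on `I`. -/
noncomputable def bajMeanW {n : ℕ} (f : ℝ → ℝ) (I : Set ℝ) (p : ℝ → ℝ)
    (l : Fin n → ℝ) (x : Fin n → ℝ) : ℝ :=
  Function.invFunOn f I ((∑ i, l i * p (x i) * f (x i)) / ∑ i, l i * p (x i))

/-- The mean lies in the interval and `f` of it recovers the weighted average. -/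
lemma baj_aux {S : Set ℝ} (hSc : S.OrdConnected)
    {g q : ℝ → ℝ} (hgd : ∀ t ∈ S, DifferentiableAt ℝ g t)
    (hq : ∀ t ∈ S, 0 < q t)
    {n : ℕ} (hn : 0 < n) (l : Fin n → ℝ) (hl : ∀ i, 0 < l i)
    (z : Fin n → ℝ) (hz : ∀ i, z i ∈ S) :
    bajMeanW g S q l z ∈ S ∧
      g (bajMeanW g S q l z) = (∑ i, l i * q (z i) * g (z i)) / (∑ i, l i * q (z i)) := by
  haveI : Nonempty (Fin n) := Fin.pos_iff_nonempty.1 hn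
  have hW : 0 < ∑ i, l i * q (z i) :=
    Finset.sum_pos (fun i _ => mul_pos (hl i) (hq _ (hz i))) univ_nonempty
  set c : ℝ := (∑ i, l i * q (z i) * g (z i)) / (∑ i, l i * q (z i)) with hc
  have hsum : ∑ i, l i * q (z i) * g (z i) = c * ∑ i, l i * q (z i) := by
    rw [hc, div_mul_cancel₀ _ hW.ne']
  have hlow : ∃ i : Fin n, g (z i) ≤ c := by
    by_contra h
    push_neg at h
    have h2 : (∑ i, l i * q (z i)) * c < ∑ i, l i * q (z i) * g (z i) := by
      rw [Finset.sum_mul]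
      exact Finset.sum_lt_sum_of_nonempty univ_nonempty fun i _ =>
        mul_lt_mul_of_pos_left (h i) (mul_pos (hl i) (hq _ (hz i)))
    rw [hsum, mul_comm] at h2
    exact lt_irrefl _ h2
  have hhigh : ∃ i : Fin n, c ≤ g (z i) := by
    by_contra h
    push_neg at h
    have h2 : ∑ i, l i * q (z i) * g (z i) < (∑ i, l i * q (z i)) * c := by
      rw [Finset.sum_mul]
      exact Finset.sum_lt_sum_of_nonempty univ_nonempty fun i _ =>
        mul_lt_mul_of_pos_left (h i) (mul_pos (hl i) (hq _ (hz i)))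
    rw [hsum, mul_comm] at h2
    exact lt_irrefl _ h2
  obtain ⟨i1, hi1⟩ := hlow
  obtain ⟨i2, hi2⟩ := hhigh
  have hcont : ContinuousOn g S := fun t ht => (hgd t ht).continuousAt.continuousWithinAt
  have himg : (g '' S).OrdConnected :=
    (hSc.isPreconnected.image g hcont).ordConnected
  have hcmem : c ∈ g '' S :=
    himg.out (Set.mem_image_of_mem g (hz i1)) (Set.mem_image_of_mem g (hz i2)) ⟨hi1, hi2⟩
  obtain ⟨t, ht, hgt⟩ := hcmem
  have hex : ∃ a ∈ S, g a = c := ⟨t, ht, hgt⟩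
  exact ⟨Function.invFunOn_mem hex, Function.invFunOn_eq hex⟩

/-- Constant sign of the derivative and corresponding strict monotonicity. -/
lemma baj_sign {S : Set ℝ} (hSo : IsOpen S) (hSc : S.OrdConnected)
    {g : ℝ → ℝ} (hgd : ∀ t ∈ S, DifferentiableAt ℝ g t)
    (hg' : ∀ t ∈ S, deriv g t ≠ 0) :
    ((∀ t ∈ S, 0 < deriv g t) ∧ StrictMonoOn g S) ∨
      ((∀ t ∈ S, deriv g t < 0) ∧ StrictAntiOn g S) := by
  have hconv : Convex ℝ S := convex_iff_ordConnected.2 hSc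
  have hcont : ContinuousOn g S := fun t ht => (hgd t ht).continuousAt.continuousWithinAt
  have hd : ∀ t ∈ S, HasDerivWithinAt g (deriv g t) S t := fun t ht =>
    (hgd t ht).hasDerivAt.hasDerivWithinAt
  rcases hasDerivWithinAt_forall_lt_or_forall_gt_of_forall_ne hconv hd hg' with h | h
  · exact Or.inr ⟨h, strictAntiOn_of_deriv_neg hconv hcont
      (fun t ht => h t (by rwa [hSo.interior_eq] at ht))⟩
  · exact Or.inl ⟨h, strictMonoOn_of_deriv_pos hconv hcont
      (fun t ht => h t (by rwa [hSo.interior_eq] at ht))⟩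


/-- Sufficient condition for the global Hölder/Minkowski-type inequality
`A_{f₀,p₀⁰λ}(Φ(x₁),…,Φ(xₙ)) ≤ Φ(A_{f₁,p₀¹λ}(x¹),…,A_{f_k,p₀^kλ}(x^k))`. -/
theorem bajMean_global_inequality_sufficient
    (k : ℕ) (hk : 2 ≤ k)
    (I : Fin k → Set ℝ) (hIo : ∀ j, IsOpen (I j)) (hIc : ∀ j, (I j).OrdConnected)
    (hIne : ∀ j, (I j).Nonempty) (hIpos : ∀ j, I j ⊆ Set.Ioi (0 : ℝ))
    (I0 : Set ℝ) (hI0o : IsOpen I0) (hI0c : I0.OrdConnected) (hI0ne : I0.Nonempty)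
    (f0 : ℝ → ℝ) (hf0d : ∀ t ∈ I0, DifferentiableAt ℝ f0 t)
    (hf0' : ∀ t ∈ I0, deriv f0 t ≠ 0)
    (f : Fin k → ℝ → ℝ) (hfd : ∀ j, ∀ t ∈ I j, DifferentiableAt ℝ (f j) t)
    (hf' : ∀ j, ∀ t ∈ I j, deriv (f j) t ≠ 0)
    (p0 : ℝ → ℝ) (hp0 : ∀ t ∈ I0, 0 < p0 t)
    (p : Fin k → ℝ → ℝ) (hp : ∀ j, ∀ t ∈ I j, 0 < p j t)
    (Φ : (Fin k → ℝ) → ℝ) (hΦmem : ∀ u : Fin k → ℝ, (∀ j, u j ∈ I j) → Φ u ∈ I0)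
    (Φ' : (Fin k → ℝ) → Fin k → ℝ)
    (hΦ' : ∀ u : Fin k → ℝ, (∀ j, u j ∈ I j) → ∀ j,
      HasDerivAt (fun t => Φ (Function.update u j t)) (Φ' u j) (u j))
    (key : ∀ u y : Fin k → ℝ, (∀ j, u j ∈ I j) → (∀ j, y j ∈ I j) →
      p0 (Φ y) * (f0 (Φ y) - f0 (Φ u)) / (p0 (Φ u) * deriv f0 (Φ u)) ≤
        ∑ j, Φ' u j *
          (p j (y j) * (f j (y j) - f j (u j)) / (p j (u j) * deriv (f j) (u j))))
    (n : ℕ) (l : Fin n → ℝ) (hl : ∀ i, 0 < l i) (hl1 : ∑ i, l i = 1)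
    (x : Fin n → Fin k → ℝ) (hx : ∀ i j, x i j ∈ I j) :
    bajMeanW f0 I0 p0 l (fun i => Φ (x i)) ≤
      Φ (fun j => bajMeanW (f j) (I j) (p j) l (fun i => x i j)) := by
  -- n is positive
  have hn : 0 < n := by
    rcases Nat.eq_zero_or_pos n with h | h
    · subst h; simp at hl1
    · exact h
  haveI : Nonempty (Fin n) := Fin.pos_iff_nonempty.1 hn
  -- the column means
  set u : Fin k → ℝ := fun j => bajMeanW (f j) (I j) (p j) l (fun i => x i j) with hu_def
  have haux : ∀ j, u j ∈ I j ∧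
      f j (u j) = (∑ i, l i * p j (x i j) * f j (x i j)) / (∑ i, l i * p j (x i j)) :=
    fun j => baj_aux (hIc j) (hfd j) (hp j) hn l hl _ (fun i => hx i j)
  have hu : ∀ j, u j ∈ I j := fun j => (haux j).1
  have hΦu : Φ u ∈ I0 := hΦmem u hu
  -- the outer mean
  have haux0 := baj_aux hI0c hf0d hp0 hn l hl (fun i => Φ (x i)) (fun i => hΦmem _ (hx i))
  set M0 : ℝ := bajMeanW f0 I0 p0 l (fun i => Φ (x i)) with hM0_def
  have hM0mem : M0 ∈ I0 := haux0.1
  have hM0val : f0 M0 =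
      (∑ i, l i * p0 (Φ (x i)) * f0 (Φ (x i))) / (∑ i, l i * p0 (Φ (x i))) := haux0.2
  have hW0 : 0 < ∑ i, l i * p0 (Φ (x i)) :=
    Finset.sum_pos (fun i _ => mul_pos (hl i) (hp0 _ (hΦmem _ (hx i)))) univ_nonempty
  -- sum the key inequality with weights l i
  have hsumkey : ∑ i, l i *
        (p0 (Φ (x i)) * (f0 (Φ (x i)) - f0 (Φ u)) / (p0 (Φ u) * deriv f0 (Φ u))) ≤
      ∑ i, l i * ∑ j, Φ' u j *
        (p j (x i j) * (f j (x i j) - f j (u j)) / (p j (u j) * deriv (f j) (u j))) :=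
    Finset.sum_le_sum fun i _ =>
      mul_le_mul_of_nonneg_left (key u (x i) hu (hx i)) (hl i).le
  -- the RHS vanishes
  have hinner : ∀ j, ∑ i, l i * (p j (x i j) * (f j (x i j) - f j (u j))) = 0 := by
    intro j
    have hWj : 0 < ∑ i, l i * p j (x i j) :=
      Finset.sum_pos (fun i _ => mul_pos (hl i) (hp j _ (hx i j))) univ_nonempty
    have e1 : ∀ i ∈ Finset.univ, l i * (p j (x i j) * (f j (x i j) - f j (u j))) =
        l i * p j (x i j) * f j (x i j) - f j (u j) * (l i * p j (x i j)) :=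
      fun i _ => by ring
    rw [Finset.sum_congr rfl e1, Finset.sum_sub_distrib, ← Finset.mul_sum, (haux j).2,
      div_mul_cancel₀ _ hWj.ne', sub_self]
  have hRHS : ∑ i, l i * ∑ j, Φ' u j *
      (p j (x i j) * (f j (x i j) - f j (u j)) / (p j (u j) * deriv (f j) (u j))) = 0 := by
    have e2 : ∀ i ∈ Finset.univ, l i * ∑ j, Φ' u j *
        (p j (x i j) * (f j (x i j) - f j (u j)) / (p j (u j) * deriv (f j) (u j))) =
        ∑ j, (Φ' u j / (p j (u j) * deriv (f j) (u j))) *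
          (l i * (p j (x i j) * (f j (x i j) - f j (u j)))) := by
      intro i _
      rw [Finset.mul_sum]
      exact Finset.sum_congr rfl fun j _ => by ring
    rw [Finset.sum_congr rfl e2, Finset.sum_comm]
    refine Finset.sum_eq_zero fun j _ => ?_
    rw [← Finset.mul_sum, hinner j, mul_zero]
  -- compute the LHS sum
  have hLHS : ∑ i, l i *
      (p0 (Φ (x i)) * (f0 (Φ (x i)) - f0 (Φ u)) / (p0 (Φ u) * deriv f0 (Φ u))) =
      ((∑ i, l i * p0 (Φ (x i))) * (f0 M0 - f0 (Φ u))) / (p0 (Φ u) * deriv f0 (Φ u)) := by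
    have e3 : ∀ i ∈ Finset.univ, l i *
        (p0 (Φ (x i)) * (f0 (Φ (x i)) - f0 (Φ u)) / (p0 (Φ u) * deriv f0 (Φ u))) =
        (l i * p0 (Φ (x i)) * f0 (Φ (x i)) - f0 (Φ u) * (l i * p0 (Φ (x i)))) /
          (p0 (Φ u) * deriv f0 (Φ u)) := fun i _ => by ring
    rw [Finset.sum_congr rfl e3, ← Finset.sum_div, Finset.sum_sub_distrib, ← Finset.mul_sum]
    congr 1
    rw [hM0val]
    field_simp
  rw [hRHS, hLHS] at hsumkey
  -- conclude by monotonicity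
  have hp0u : 0 < p0 (Φ u) := hp0 _ hΦu
  rcases baj_sign hI0o hI0c hf0d hf0' with ⟨hpos, hmono⟩ | ⟨hneg, hanti⟩
  · have hD : 0 < p0 (Φ u) * deriv f0 (Φ u) := mul_pos hp0u (hpos _ hΦu)
    have h1 : (∑ i, l i * p0 (Φ (x i))) * (f0 M0 - f0 (Φ u)) ≤ 0 := by
      by_contra h
      push_neg at h
      exact absurd hsumkey (not_le.2 (div_pos h hD))
    have h2 : f0 M0 ≤ f0 (Φ u) := by
      nlinarith [hW0]
    exact (hmono.le_iff_le hM0mem hΦu).1 h2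
  · have hD : p0 (Φ u) * deriv f0 (Φ u) < 0 := mul_neg_of_pos_of_neg hp0u (hneg _ hΦu)
    have h1 : 0 ≤ (∑ i, l i * p0 (Φ (x i))) * (f0 M0 - f0 (Φ u)) := by
      by_contra h
      push_neg at h
      exact absurd hsumkey (not_le.2 (div_pos_of_neg_of_neg h hD))
    have h2 : f0 (Φ u) ≤ f0 M0 := by
      nlinarith [hW0]
    exact (hanti.le_iff_ge hΦu hM0mem).1 h2
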